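/- Let G be a finite group and let I and J be structure subgroups of odd order with δ_G(I) = δ_G(J) = n, such that X_J is an option of X_I. If X_J has an option X_L with |L| even and δ_G(L) = n, then X_I has an option X_K with |K| even and δ_G(K) = n. (In the paper's terminology: if X_J is smooth, then so is X_I.) -/
import Mathlib


/-- ⌈P⌉: the intersection of all maximal subgroups of `G` containing `P`
(equal to `G`, i.e. `⊤`, if no maximal subgroup contains `P`). -/
def ceilSet {G : Type*} [Group G] (P : Set G) : Subgroup G :=
  sInf {M : Subgroup G | IsCoatom M ∧ P ⊆ (M : Set G)}

/-- The deficiency of a subset `S` of a finite group `G`: the minimum size of a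
subset `Q` of `G` such that `S ∪ Q` generates `G`. -/
noncomputable def deficiency {G : Type*} [Group G] [Fintype G] (S : Set G) : ℕ :=
  sInf {n : ℕ | ∃ Q : Finset G, Q.card = n ∧ Subgroup.closure (S ∪ (Q : Set G)) = ⊤}

/-- The structure class `X_J` is an option of the structure class `X_I`. -/
def IsStructOption {G : Type*} [Group G] (I J : Subgroup G) : Prop :=
  ∃ g ∉ I, ceilSet ((I : Set G) ∪ {g}) = J

lemma subset_ceilSet {G : Type*} [Group G] (P : Set G) : P ⊆ (ceilSet P : Set G) := by
  intro x hx
  simp only [ceilSet, SetLike.mem_coe, Subgroup.mem_sInf]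
  intro M hM
  exact hM.2 hx

lemma deficiency_set_nonempty {G : Type*} [Group G] [Fintype G] (S : Set G) :
    {n : ℕ | ∃ Q : Finset G, Q.card = n ∧ Subgroup.closure (S ∪ (Q : Set G)) = ⊤}.Nonempty := by
  refine ⟨(Finset.univ : Finset G).card, Finset.univ, rfl, ?_⟩
  simp

lemma deficiency_anti {G : Type*} [Group G] [Fintype G] {S T : Set G} (h : S ⊆ T) :
    deficiency T ≤ deficiency S := by
  obtain ⟨Q, hQ, hgen⟩ := Nat.sInf_mem (deficiency_set_nonempty S)
  refine Nat.sInf_le ⟨Q, hQ, ?_⟩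
  rw [eq_top_iff, ← hgen]
  exact Subgroup.closure_mono (Set.union_subset_union_left _ h)

/-- If `X_I, X_J` are odd structure classes of the same deficiency `n`, `X_J`
is an option of `X_I`, and `X_J` is smooth (has an even option of deficiency
`n`), then `X_I` is smooth as well. -/
theorem smooth_of_smooth_option {G : Type*} [Group G] [Fintype G]
    (I J : Subgroup G) (hI : ceilSet (I : Set G) = I) (hJ : ceilSet (J : Set G) = J)
    (hIodd : Odd (Nat.card I)) (hJodd : Odd (Nat.card J))
    (n : ℕ) (hIdef : deficiency (I : Set G) = n) (hJdef : deficiency (J : Set G) = n)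
    (hopt : IsStructOption I J)
    (hsmooth : ∃ L : Subgroup G, IsStructOption J L ∧ Even (Nat.card L) ∧
      deficiency (L : Set G) = n) :
    ∃ K : Subgroup G, IsStructOption I K ∧ Even (Nat.card K) ∧
      deficiency (K : Set G) = n := by
  obtain ⟨g, hg, hgJ⟩ := hopt
  obtain ⟨L, ⟨h, hhJ, hhL⟩, hLeven, hLdef⟩ := hsmooth
  -- I ≤ J ≤ L
  have hIJ : I ≤ J := by
    intro x hx
    rw [← hgJ]
    exact subset_ceilSet _ (Set.mem_union_left _ hx)
  have hJL : J ≤ L := by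
    intro x hx
    rw [← hhL]
    exact subset_ceilSet _ (Set.mem_union_left _ hx)
  -- find an involution t in L
  haveI : Fintype L := Fintype.ofFinite L
  haveI : Fact (Nat.Prime 2) := ⟨Nat.prime_two⟩
  obtain ⟨t, ht⟩ := exists_prime_orderOf_dvd_card (G := L) 2
    (by rw [← Nat.card_eq_fintype_card]; exact hLeven.two_dvd)
  set t0 : G := (t : G) with ht0
  have htL : t0 ∈ L := t.2
  have ht0ord : orderOf t0 = 2 := by
    rw [← ht]
    exact Subgroup.orderOf_coe t
  have ht0I : t0 ∉ I := by
    intro hmem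
    have h2 : (2 : ℕ) ∣ Nat.card I := by
      have : orderOf (⟨t0, hmem⟩ : I) = 2 := by
        rw [← ht0ord]
        exact (Subgroup.orderOf_coe (⟨t0, hmem⟩ : I)).symm
      rw [← this]
      exact orderOf_dvd_natCard _
    rw [Nat.odd_iff] at hIodd
    omega
  refine ⟨ceilSet ((I : Set G) ∪ {t0}), ⟨t0, ht0I, rfl⟩, ?_, ?_⟩
  · -- even: t0 is an element of order 2 of K
    have htK : t0 ∈ ceilSet ((I : Set G) ∪ {t0}) :=
      subset_ceilSet _ (Set.mem_union_right _ rfl)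
    have h2 : (2 : ℕ) ∣ Nat.card (ceilSet ((I : Set G) ∪ {t0})) := by
      have : orderOf (⟨t0, htK⟩ : ceilSet ((I : Set G) ∪ {t0})) = 2 := by
        rw [← ht0ord]
        exact (Subgroup.orderOf_coe _).symm
      rw [← this]
      exact orderOf_dvd_natCard _
    rw [Nat.even_iff]
    omega
  · -- deficiency = n
    have hIK : I ≤ ceilSet ((I : Set G) ∪ {t0}) := fun x hx =>
      subset_ceilSet _ (Set.mem_union_left _ hx)
    have hKL : ceilSet ((I : Set G) ∪ {t0}) ≤ L := by
      rw [← hhL]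
      apply sInf_le_sInf
      intro M hM
      refine ⟨hM.1, Set.union_subset ?_ ?_⟩
      · exact fun x hx => hM.2 (Set.mem_union_left _ (hIJ hx))
      · intro x hx
        rw [Set.mem_singleton_iff] at hx
        subst hx
        have hLM : L ≤ M := by rw [← hhL]; exact sInf_le hM
        exact hLM htL
    have h1 : deficiency ((ceilSet ((I : Set G) ∪ {t0}) : Subgroup G) : Set G) ≤ n := by
      rw [← hIdef]
      exact deficiency_anti hIK
    have h2 : n ≤ deficiency ((ceilSet ((I : Set G) ∪ {t0}) : Subgroup G) : Set G) := by
      rw [← hLdef]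
      exact deficiency_anti hKL
    omega
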